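/- For any finite graph G, vertex v and integer p ≥ 1, the number of v-minimal sets C such that |C| ≤ p and G[C] is connected is at most 4^p · |V(G)|. -/

import Mathlib

open Finset

/-- The set of edges of `G` with exactly one endpoint in `X`. -/
def cutSet {V : Type*} [Fintype V] [DecidableEq V] (G : SimpleGraph V) [DecidableRel G.Adj]
    (X : Finset V) : Finset (Sym2 V) :=
  G.edgeFinset.filter (fun e =>
    ∃ a ∈ (univ : Finset V), ∃ b ∈ (univ : Finset V), e = s(a, b) ∧ a ∈ X ∧ b ∉ X)

/-- `d(X)`: the number of edges of `G` leaving `X`. -/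
def cutCard {V : Type*} [Fintype V] [DecidableEq V] (G : SimpleGraph V) [DecidableRel G.Adj]
    (X : Finset V) : ℕ :=
  (cutSet G X).card

/-- `C` is a `v`-minimal set: `C` is nonempty, `v ∉ C`, and every proper subset `C' ⊂ C`
satisfies `d(C' ∪ {v}) > d(C ∪ {v})`. -/
def VMinimal {V : Type*} [Fintype V] [DecidableEq V] (G : SimpleGraph V)
    [DecidableRel G.Adj] (v : V) (C : Finset V) : Prop :=
  C.Nonempty ∧ v ∉ C ∧
    ∀ C' : Finset V, C' ⊂ C → cutCard G (insert v C) < cutCard G (insert v C')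

section Aux

variable {V : Type*} [Fintype V] [DecidableEq V] (G : SimpleGraph V) [DecidableRel G.Adj]

/-- Helper: a walk from a vertex satisfying `P` to one not satisfying `P` crosses an edge. -/
lemma walk_cross {α : Type*} {H : SimpleGraph α} (P : α → Prop) :
    ∀ {a b : α}, H.Walk a b → P a → ¬ P b → ∃ x y, H.Adj x y ∧ P x ∧ ¬ P y := by
  intro a b w
  induction w with
  | nil => intro h h'; exact absurd h h'
  | @cons a c b h q ih =>
      intro ha hb
      by_cases hc : P c
      · exact ih hc hb
      · exact ⟨a, c, h, ha, hc⟩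

/-- If `G[C]` is connected and `S` is a nonempty proper subset, there is an edge leaving `S`
inside `C`. -/
lemma exists_boundary {C S : Finset V}
    (hconn : (G.induce (C : Set V)).Connected) (hSC : S ⊆ C) (hS : S.Nonempty) (hne : S ≠ C) :
    ∃ u ∈ C, u ∉ S ∧ ∃ s ∈ S, G.Adj s u := by
  obtain ⟨s, hs⟩ := hS
  have hsC : s ∈ C := hSC hs
  obtain ⟨t, htC, htS⟩ : ∃ t ∈ C, t ∉ S := by
    by_contra h
    push_neg at h
    exact hne (Finset.Subset.antisymm hSC (fun x hx => h x hx))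
  obtain ⟨w⟩ := hconn.preconnected ⟨s, by simpa using hsC⟩ ⟨t, by simpa using htC⟩
  obtain ⟨x, y, hxy, hx, hy⟩ :=
    walk_cross (fun z : (C : Set V) => (z : V) ∈ S) w (by simpa using hs) (by simpa using htS)
  refine ⟨y, by simpa using y.2, hy, x, hx, ?_⟩
  simpa using hxy

open scoped Classical in
/-- Candidate sets: connected `v`-minimal sets of size `≤ p` containing `S` and avoiding `F`. -/
noncomputable def cand (v : V) (p : ℕ) (S F : Finset V) : Finset (Finset V) :=
  univ.powerset.filter (fun C =>
    (VMinimal G v C ∧ C.card ≤ p ∧ (G.induce (C : Set V)).Connected) ∧ S ⊆ C ∧ Disjoint F C)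

lemma mem_cand {v : V} {p : ℕ} {S F C : Finset V} :
    C ∈ cand G v p S F ↔
      (VMinimal G v C ∧ C.card ≤ p ∧ (G.induce (C : Set V)).Connected) ∧ S ⊆ C ∧ Disjoint F C := by
  classical
  simp [cand]

open scoped Classical in
/-- Key fact: if `C` is `v`-minimal and `F` is a set of vertices outside `C`, each distinct from
`v` and adjacent to `C`, then `|F| < |C|`. -/
lemma lemA {v : V} {C F : Finset V} (hC : VMinimal G v C)
    (hF : ∀ f ∈ F, f ≠ v ∧ ∃ s ∈ C, G.Adj s f) (hdisj : Disjoint F C) :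
    F.card < C.card := by
  have hv : v ∉ C := hC.2.1
  set X : Finset V := insert v C with hX
  have hlt : (cutSet G X).card < (cutSet G {v}).card := by
    have h0 : (∅ : Finset V) ⊂ C := Finset.empty_ssubset.mpr hC.1
    have := hC.2.2 ∅ h0
    simpa [cutCard] using this
  have hg : ∀ f ∈ F, ∃ s, s ∈ C ∧ G.Adj s f := by
    intro f hf
    obtain ⟨_, s, hs, h⟩ := hF f hf
    exact ⟨s, hs, h⟩
  set g : V → V := fun f => if h : ∃ s, s ∈ C ∧ G.Adj s f then h.choose else v with hgdef
  have hgC : ∀ f ∈ F, g f ∈ C ∧ G.Adj (g f) f := by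
    intro f hf
    have h := hg f hf
    simp only [hgdef, dif_pos h]
    exact h.choose_spec
  set E2 : Finset (Sym2 V) := (cutSet G X).filter (fun e => v ∈ e) with hE2
  set E1 : Finset (Sym2 V) := (C.filter (fun b => G.Adj v b)).image (fun b => s(v, b)) with hE1
  have hFcard : F.card ≤ ((cutSet G X) \ E2).card := by
    apply Finset.card_le_card_of_injOn (fun f => s(g f, f))
    · intro f hf
      obtain ⟨hgc, hadj⟩ := hgC f hf
      have hfv : f ≠ v := (hF f hf).1
      have hfC : f ∉ C := fun h => (Finset.disjoint_left.mp hdisj hf) h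
      have hfX : f ∉ X := by simp [hX, hfv, hfC]
      rw [Finset.mem_coe, Finset.mem_sdiff]
      constructor
      · simp only [cutSet, Finset.mem_filter]
        refine ⟨by simpa [SimpleGraph.mem_edgeFinset] using hadj,
          g f, by simp, f, by simp, rfl, by simp [hX, hgc], hfX⟩
      · simp only [hE2, Finset.mem_filter, not_and]
        intro _
        simp only [Sym2.mem_iff]
        push_neg
        exact ⟨fun h => absurd (h ▸ hgc) hv, Ne.symm hfv⟩
    · intro f hf f' hf' heq
      simp only [Sym2.eq, Sym2.rel_iff', Prod.mk.injEq, Prod.swap_prod_mk] at heq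
      rcases heq with ⟨h1, h2⟩ | ⟨h1, h2⟩
      · exact h2
      · exact absurd (h2 ▸ (hgC f' hf').1) (fun h => (Finset.disjoint_left.mp hdisj hf) h)
  have hsub : cutSet G {v} ⊆ E1 ∪ E2 := by
    intro e he
    simp only [cutSet, Finset.mem_filter] at he
    obtain ⟨hedge, a, -, b, -, rfl, ha, hb⟩ := he
    simp only [Finset.mem_singleton] at ha hb
    subst ha
    have hadj : G.Adj a b := by simpa [SimpleGraph.mem_edgeFinset] using hedge
    by_cases hbC : b ∈ C
    · apply Finset.mem_union_left
      simp only [hE1, Finset.mem_image, Finset.mem_filter]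
      exact ⟨b, ⟨hbC, hadj⟩, rfl⟩
    · apply Finset.mem_union_right
      simp only [hE2, Finset.mem_filter]
      refine ⟨?_, by simp⟩
      simp only [cutSet, Finset.mem_filter]
      exact ⟨hedge, a, by simp, b, by simp, rfl, by simp [hX], by simp [hX, hb, hbC]⟩
  have hE1card : E1.card ≤ C.card :=
    le_trans Finset.card_image_le (Finset.card_filter_le _ _)
  have hE2sub : E2 ⊆ cutSet G X := Finset.filter_subset _ _
  have hsd : ((cutSet G X) \ E2).card + E2.card = (cutSet G X).card :=
    Finset.card_sdiff_add_card_eq_card hE2sub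
  have hcv : (cutSet G {v}).card ≤ E1.card + E2.card :=
    le_trans (Finset.card_le_card hsub) (Finset.card_union_le _ _)
  omega

open scoped Classical in
lemma main_count (v : V) (p : ℕ) : ∀ (n : ℕ) (S F : Finset V), S.Nonempty →
    (∀ f ∈ F, f ∉ S ∧ f ≠ v ∧ ∃ s ∈ S, G.Adj s f) →
    2 * p ≤ S.card + F.card + 1 + n →
    (cand G v p S F).card ≤ 2 ^ n := by
  intro n
  induction n with
  | zero =>
    intro S F hS hF hcard
    rw [pow_zero, Finset.card_le_one]
    have key : ∀ D ∈ cand G v p S F, D = S := by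
      intro D hD
      rw [mem_cand] at hD
      obtain ⟨⟨hmin, hcard', hconn⟩, hSD, hdisj⟩ := hD
      have hFlt : F.card < D.card := by
        refine lemA G hmin (fun f hf => ⟨(hF f hf).2.1, ?_⟩) hdisj
        obtain ⟨s, hs, h⟩ := (hF f hf).2.2
        exact ⟨s, hSD hs, h⟩
      have hSle : S.card ≤ D.card := Finset.card_le_card hSD
      have heq : D.card ≤ S.card := by omega
      exact (Finset.eq_of_subset_of_card_le hSD heq).symm
    intro a ha b hb
    rw [key a ha, key b hb]
  | succ n ih =>
    intro S F hS hF hcard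
    by_cases hex : ∃ u, u ∉ S ∧ u ∉ F ∧ u ≠ v ∧ ∃ s ∈ S, G.Adj s u
    · obtain ⟨u, huS, huF, huv, s, hsS, hadj⟩ := hex
      have hsplit : cand G v p S F ⊆ cand G v p (insert u S) F ∪ cand G v p S (insert u F) := by
        intro C hC
        rw [mem_cand] at hC
        obtain ⟨h1, hSC, hdisj⟩ := hC
        by_cases huC : u ∈ C
        · apply Finset.mem_union_left
          rw [mem_cand]
          exact ⟨h1, Finset.insert_subset huC hSC, hdisj⟩
        · apply Finset.mem_union_right
          rw [mem_cand]
          refine ⟨h1, hSC, ?_⟩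
          rw [Finset.disjoint_left] at hdisj ⊢
          intro a ha
          rcases Finset.mem_insert.mp ha with rfl | ha
          · exact fun h => huC h
          · exact hdisj ha
      have c1 : (cand G v p (insert u S) F).card ≤ 2 ^ n := by
        apply ih (insert u S) F ⟨s, Finset.mem_insert_of_mem hsS⟩
        · intro f hf
          obtain ⟨h1, h2, s', hs', h3⟩ := hF f hf
          refine ⟨?_, h2, s', Finset.mem_insert_of_mem hs', h3⟩
          simp only [Finset.mem_insert]
          push_neg
          exact ⟨fun h => huF (h ▸ hf), h1⟩
        · rw [Finset.card_insert_of_notMem huS]; omega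
      have c2 : (cand G v p S (insert u F)).card ≤ 2 ^ n := by
        apply ih S (insert u F) hS
        · intro f hf
          rcases Finset.mem_insert.mp hf with rfl | hf
          · exact ⟨huS, huv, s, hsS, hadj⟩
          · exact hF f hf
        · rw [Finset.card_insert_of_notMem huF]; omega
      calc (cand G v p S F).card
          ≤ (cand G v p (insert u S) F ∪ cand G v p S (insert u F)).card :=
            Finset.card_le_card hsplit
        _ ≤ (cand G v p (insert u S) F).card + (cand G v p S (insert u F)).card :=
            Finset.card_union_le _ _
        _ ≤ 2 ^ n + 2 ^ n := add_le_add c1 c2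
        _ = 2 ^ (n + 1) := by ring
    · have h1 : (cand G v p S F).card ≤ 1 := by
        rw [Finset.card_le_one]
        have key : ∀ D ∈ cand G v p S F, D = S := by
          intro D hD
          rw [mem_cand] at hD
          obtain ⟨⟨hmin, hc, hconn⟩, hSD, hdisj⟩ := hD
          by_contra hne
          obtain ⟨u, huD, huS, s', hs', hadj'⟩ :=
            exists_boundary G hconn hSD hS (fun h => hne h.symm)
          exact hex ⟨u, huS, fun h => Finset.disjoint_left.mp hdisj h huD,
            fun h => hmin.2.1 (h ▸ huD), s', hs', hadj'⟩
        intro a ha b hb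
        rw [key a ha, key b hb]
      calc (cand G v p S F).card ≤ 1 := h1
        _ ≤ 2 ^ (n + 1) := Nat.one_le_two_pow

end Aux

open scoped Classical in
/-- The number of connected `v`-minimal sets of size at most `p` is at most `4^p · n`. -/
theorem vMinimal_connected_count {V : Type*} [Fintype V] [DecidableEq V]
    (G : SimpleGraph V) [DecidableRel G.Adj] (v : V) (p : ℕ) (hp : 1 ≤ p) :
    ((univ : Finset V).powerset.filter
        (fun C => VMinimal G v C ∧ C.card ≤ p ∧ (G.induce (C : Set V)).Connected)).card
      ≤ 4 ^ p * Fintype.card V := by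
  classical
  have hsub : ((univ : Finset V).powerset.filter
        (fun C => VMinimal G v C ∧ C.card ≤ p ∧ (G.induce (C : Set V)).Connected))
      ⊆ univ.biUnion (fun u => cand G v p {u} ∅) := by
    intro C hC
    simp only [Finset.mem_filter, Finset.mem_powerset] at hC
    obtain ⟨-, hmin, hle, hconn⟩ := hC
    obtain ⟨u, hu⟩ := hmin.1
    rw [Finset.mem_biUnion]
    refine ⟨u, Finset.mem_univ u, ?_⟩
    rw [mem_cand]
    exact ⟨⟨hmin, hle, hconn⟩, Finset.singleton_subset_iff.mpr hu, Finset.disjoint_empty_left _⟩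
  have hcand : ∀ u : V, (cand G v p ({u} : Finset V) ∅).card ≤ 2 ^ (2 * p - 2) := by
    intro u
    apply main_count G v p (2 * p - 2) {u} ∅ (Finset.singleton_nonempty u) (by simp)
    simp only [Finset.card_singleton, Finset.card_empty]
    omega
  calc ((univ : Finset V).powerset.filter
        (fun C => VMinimal G v C ∧ C.card ≤ p ∧ (G.induce (C : Set V)).Connected)).card
      ≤ (univ.biUnion (fun u => cand G v p {u} ∅)).card := Finset.card_le_card hsub
    _ ≤ ∑ u : V, (cand G v p {u} ∅).card := Finset.card_biUnion_le
    _ ≤ ∑ _u : V, 2 ^ (2 * p - 2) := Finset.sum_le_sum (fun u _ => hcand u)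
    _ = Fintype.card V * 2 ^ (2 * p - 2) := by
        rw [Finset.sum_const, smul_eq_mul, Finset.card_univ]
    _ ≤ Fintype.card V * 4 ^ p := by
        apply Nat.mul_le_mul_left
        calc 2 ^ (2 * p - 2) ≤ 2 ^ (2 * p) := Nat.pow_le_pow_right (by norm_num) (by omega)
          _ = 4 ^ p := by rw [pow_mul]; norm_num
    _ = 4 ^ p * Fintype.card V := Nat.mul_comm _ _
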